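/- Let n be a positive integer and ℓ an integer with 0 ≤ ℓ ≤ n, and let b ≥ n. The number of pairs (A, y) with A ⊆ {1,…,n}, |A| ≤ ℓ, y ∈ {1,…,b}, excluding those pairs where y ∈ {1,…,n} and y is strictly smaller than every element of A, equals b·∑_{r=0}^{ℓ} C(n,r) − ∑_{r=1}^{ℓ+1} C(n,r). -/

import Mathlib

open Finset

lemma card_filter_card_mem (n : ℕ) (s : Finset ℕ) :
    ((univ : Finset (Finset (Fin n))).filter fun A => A.card ∈ s).card
      = ∑ r ∈ s, n.choose r := by
  have h : (univ : Finset (Finset (Fin n))).filter (fun A => A.card ∈ s)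
      = s.biUnion fun r => (univ : Finset (Fin n)).powersetCard r := by
    ext A
    simp [Finset.mem_powersetCard, eq_comm]
  rw [h, card_biUnion]
  · exact Finset.sum_congr rfl fun r _ => by simp [Finset.card_powersetCard]
  · intro a ha b hb hab
    simp only [Finset.disjoint_left, Finset.mem_powersetCard]
    rintro A ⟨-, rfl⟩ ⟨-, h2⟩
    exact hab h2

/-- Lemma 3.11, `p = 2` case.  The number of pairs `(A, y)` with `A ⊆ {1,…,n}`, `|A| ≤ ℓ`,
`y ∈ {1,…,b}`, excluding those where `y ∈ {1,…,n}` and `y` is strictly smaller than every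
element of `A`, equals `b·∑_{r=0}^{ℓ} C(n,r) − ∑_{r=1}^{ℓ+1} C(n,r)`. -/
theorem test_loop_count_two (n ℓ b : ℕ) (hn : 1 ≤ n) (hℓ : ℓ ≤ n) (hb : n ≤ b) :
    (Nat.card {P : Finset (Fin n) × Fin b //
        P.1.card ≤ ℓ ∧ ¬((P.2 : ℕ) < n ∧ ∀ a ∈ P.1, (P.2 : ℕ) < (a : ℕ))} : ℤ) =
      (b : ℤ) * ∑ r ∈ Finset.range (ℓ + 1), (n.choose r : ℤ)
        - ∑ r ∈ Finset.Icc 1 (ℓ + 1), (n.choose r : ℤ) := by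
  classical
  set q : Finset (Fin n) × Fin b → Prop :=
    fun P => (P.2 : ℕ) < n ∧ ∀ a ∈ P.1, (P.2 : ℕ) < (a : ℕ) with hq
  set T : Finset (Finset (Fin n) × Fin b) := univ.filter fun P => P.1.card ≤ ℓ with hT
  have h1 : Nat.card {P : Finset (Fin n) × Fin b // P.1.card ≤ ℓ ∧ ¬ q P}
      = (T.filter fun P => ¬ q P).card := by
    rw [Nat.card_eq_fintype_card, Fintype.card_subtype, hT, filter_filter]
  have h2 : (T.filter q).card + (T.filter fun P => ¬ q P).card = T.card :=
    Finset.card_filter_add_card_filter_not (fun P => q P)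
  have hn0 : 0 < n := hn
  -- T.card
  have hTcard : T.card = (∑ r ∈ Finset.range (ℓ + 1), n.choose r) * b := by
    have : T = (univ.filter fun A : Finset (Fin n) => A.card ∈ Finset.range (ℓ+1)) ×ˢ univ := by
      ext P
      simp [hT, Nat.lt_succ_iff]
    rw [this, card_product, card_filter_card_mem, card_univ, Fintype.card_fin]
  -- E.card via bijection
  set m : Finset (Fin n) → Fin n := fun B => B.min.untopD ⟨0, hn0⟩ with hm
  have hmval : ∀ (B : Finset (Fin n)) (h : B.Nonempty), m B = B.min' h := by
    intro B h
    rw [hm]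
    simp only [← Finset.coe_min' h, WithTop.untopD_coe]
  have hEcard : (T.filter q).card
      = (univ.filter fun B : Finset (Fin n) => B.card ∈ Finset.Icc 1 (ℓ+1)).card := by
    apply Finset.card_nbij'
      (i := fun (P : Finset (Fin n) × Fin b) => insert (⟨(P.2 : ℕ) % n, Nat.mod_lt _ hn0⟩ : Fin n) P.1)
      (j := fun (B : Finset (Fin n)) => (B.erase (m B), (⟨((m B : Fin n) : ℕ), lt_of_lt_of_le (m B).is_lt hb⟩ : Fin b)))
    · intro P hP
      simp only [mem_coe, mem_filter, mem_univ, true_and, Finset.mem_Icc] at hP ⊢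
      have hcard := (mem_filter.mp hP.1).2
      constructor
      · exact Nat.one_le_iff_ne_zero.mpr (by simp)
      · exact le_trans (Finset.card_insert_le _ _) (by omega)
    · intro B hB
      simp only [mem_coe, mem_filter, mem_univ, true_and, Finset.mem_Icc] at hB
      have hne : B.Nonempty := Finset.card_pos.mp (by omega)
      simp only [mem_coe]
      rw [hmval B hne]
      have hmin := B.min'_mem hne
      simp only [hT, hq, mem_filter, mem_univ, true_and]
      refine ⟨?_, ?_, ?_⟩
      · have := Finset.card_erase_of_mem hmin
        omega
      · exact (B.min' hne).is_lt
      · intro a ha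
        have h1 := Finset.mem_erase.mp ha
        have h2 := B.min'_le a h1.2
        exact lt_of_le_of_ne h2 (fun h => h1.1 (Fin.ext h).symm)
    · intro P hP
      simp only [mem_coe, mem_filter, hq] at hP
      obtain ⟨-, hlt, hall⟩ := hP
      have hmod : (P.2 : ℕ) % n = (P.2 : ℕ) := Nat.mod_eq_of_lt hlt
      set y : Fin n := ⟨(P.2 : ℕ) % n, Nat.mod_lt _ hn0⟩ with hy
      have hymem : ∀ a ∈ P.1, (y : ℕ) < (a : ℕ) := by
        intro a ha; rw [hy]; simpa [hmod] using hall a ha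
      have hnotmem : y ∉ P.1 := fun h => lt_irrefl _ (hymem _ h)
      have hmin : m (insert y P.1) = y := by
        rw [hmval _ (Finset.insert_nonempty _ _)]
        apply le_antisymm
        · exact Finset.min'_le _ _ (Finset.mem_insert_self _ _)
        · apply Finset.le_min'
          intro z hz
          rcases Finset.mem_insert.mp hz with rfl | hz
          · exact le_refl _
          · exact le_of_lt (hymem _ hz)
      have : (insert y P.1).erase (m (insert y P.1)) = P.1 := by
        rw [hmin, Finset.erase_insert hnotmem]
      refine Prod.ext ?_ ?_
      · simpa using this
      · simp only [← hy, hmin]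
        apply Fin.ext
        simp [hy, hmod]
    · intro B hB
      simp only [mem_coe, mem_filter, mem_univ, true_and, Finset.mem_Icc] at hB
      have hne : B.Nonempty := Finset.card_pos.mp (by omega)
      simp only
      have hval : ((⟨((m B : Fin n) : ℕ) % n, Nat.mod_lt _ hn0⟩ : Fin n)) = m B := by
        apply Fin.ext
        simp [Nat.mod_eq_of_lt (m B).is_lt]
      rw [hval]
      rw [hmval B hne]
      exact Finset.insert_erase (B.min'_mem hne)
  -- conclusion
  simp only [hq] at h1
  rw [h1]
  have e1 : ((T.filter fun P => ¬ q P).card : ℤ) = (T.card : ℤ) - ((T.filter q).card : ℤ) := by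
    omega
  rw [e1, hTcard, hEcard, card_filter_card_mem]
  push_cast
  ring
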